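/- Assume k has characteristic zero. Every nonzero ideal I of A with τ(I) = I contains ι(b) for some nonzero b ∈ B; that is, every nonzero τ-invariant ideal of A has nonzero contraction to B. -/

import Mathlib

/-- The additive embedding `(m, n) ↦ (m, n, 0)` of `ℤ × ℤ` into `ℤ × ℤ × ℤ`. -/
noncomputable def embZZ : (ℤ × ℤ) →+ ℤ × ℤ × ℤ where
  toFun v := (v.1, v.2, 0)
  map_zero' := rfl
  map_add' := by rintro ⟨m, n⟩ ⟨m', n'⟩; simp

/-- The `k`-algebra embedding `ι : B = k[x^{±1}, y^{±1}] → A = k[x^{±1}, y^{±1}, u^{±1}]`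
induced by `(m, n) ↦ (m, n, 0)`. -/
noncomputable def ιBA (k : Type*) [Field k] :
    AddMonoidAlgebra k (ℤ × ℤ) →ₐ[k] AddMonoidAlgebra k (ℤ × ℤ × ℤ) :=
  AddMonoidAlgebra.mapDomainAlgHom k k embZZ

/-- The element `x` of `A`. -/
noncomputable def Xa (k : Type*) [Field k] : AddMonoidAlgebra k (ℤ × ℤ × ℤ) :=
  AddMonoidAlgebra.single ((1 : ℤ), (0 : ℤ), (0 : ℤ)) 1

/-- The element `y` of `A`. -/
noncomputable def Ya (k : Type*) [Field k] : AddMonoidAlgebra k (ℤ × ℤ × ℤ) :=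
  AddMonoidAlgebra.single ((0 : ℤ), (1 : ℤ), (0 : ℤ)) 1

/-- The element `u` of `A`. -/
noncomputable def Ua (k : Type*) [Field k] : AddMonoidAlgebra k (ℤ × ℤ × ℤ) :=
  AddMonoidAlgebra.single ((0 : ℤ), (0 : ℤ), (1 : ℤ)) 1

/-! ### Auxiliary material -/

open AddMonoidAlgebra


lemma aux_single_congr {k : Type*} [Field k] {G : Type*} [AddMonoid G] {a b : G} {c d : k}
    (h1 : a = b) (h2 : c = d) :
    (AddMonoidAlgebra.single a c : AddMonoidAlgebra k G) = AddMonoidAlgebra.single b d := by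
  rw [h1, h2]

/-- The matrix `[[5,1],[4,1]]` as a bijection of `ℤ × ℤ`. -/
def auxM2 : (ℤ × ℤ) ≃ (ℤ × ℤ) where
  toFun v := (5 * v.1 + v.2, 4 * v.1 + v.2)
  invFun w := (w.1 - w.2, 5 * w.2 - 4 * w.1)
  left_inv := by rintro ⟨m, n⟩; simp only [Prod.mk.injEq]; refine ⟨by ring, by ring⟩
  right_inv := by rintro ⟨m, n⟩; simp only [Prod.mk.injEq]; refine ⟨by ring, by ring⟩

/-- The corresponding bijection of `ℤ × ℤ × ℤ` (identity on the third factor). -/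
def auxM3 : (ℤ × ℤ × ℤ) ≃ (ℤ × ℤ × ℤ) where
  toFun v := (5 * v.1 + v.2.1, 4 * v.1 + v.2.1, v.2.2)
  invFun w := (w.1 - w.2.1, 5 * w.2.1 - 4 * w.1, w.2.2)
  left_inv := by rintro ⟨m, n, p⟩; simp only [Prod.mk.injEq]; refine ⟨by ring, by ring, trivial⟩
  right_inv := by rintro ⟨m, n, p⟩; simp only [Prod.mk.injEq]; refine ⟨by ring, by ring, trivial⟩

section Aux

variable {k : Type*} [Field k]

/-- The monomial automorphism of `B` induced by `auxM2`. -/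
noncomputable def auxSig (b : AddMonoidAlgebra k (ℤ × ℤ)) : AddMonoidAlgebra k (ℤ × ℤ) :=
  AddMonoidAlgebra.ofCoeff (Finsupp.equivMapDomain auxM2 b.coeff)

lemma auxSig_apply (b : AddMonoidAlgebra k (ℤ × ℤ)) (w : ℤ × ℤ) :
    (auxSig b).coeff w = b.coeff (auxM2.symm w) := rfl

lemma auxSig_zero : auxSig (0 : AddMonoidAlgebra k (ℤ × ℤ)) = 0 := by
  ext w; simp [auxSig_apply]

lemma auxEmb_inj (p : ℤ) :
    Function.Injective (fun w : ℤ × ℤ => ((w.1, w.2, p) : ℤ × ℤ × ℤ)) := by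
  rintro ⟨a, b⟩ ⟨c, d⟩ h
  simpa [Prod.ext_iff] using h

/-- The `p`-th `u`-component of an element of `A`. -/
noncomputable def auxPi (p : ℤ) (f : AddMonoidAlgebra k (ℤ × ℤ × ℤ)) :
    AddMonoidAlgebra k (ℤ × ℤ) :=
  AddMonoidAlgebra.ofCoeff (Finsupp.comapDomain (fun w : ℤ × ℤ => ((w.1, w.2, p) : ℤ × ℤ × ℤ)) f.coeff
    ((auxEmb_inj p).injOn))

lemma auxPi_apply (p : ℤ) (f : AddMonoidAlgebra k (ℤ × ℤ × ℤ)) (w : ℤ × ℤ) :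
    (auxPi p f).coeff w = f.coeff (w.1, w.2, p) := rfl

lemma auxPi_sub (p : ℤ) (f g : AddMonoidAlgebra k (ℤ × ℤ × ℤ)) :
    auxPi p (f - g) = auxPi p f - auxPi p g := by
  ext w
  rfl

/-- The finite set of `u`-degrees occurring in an element of `A`. -/
noncomputable def auxS (f : AddMonoidAlgebra k (ℤ × ℤ × ℤ)) : Finset ℤ :=
  f.coeff.support.image (fun v => v.2.2)

lemma aux_mem_S {f : AddMonoidAlgebra k (ℤ × ℤ × ℤ)} {j : ℤ} :
    j ∈ auxS f ↔ auxPi j f ≠ 0 := by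
  constructor
  · intro hj h0
    obtain ⟨v, hv, hvj⟩ := Finset.mem_image.1 hj
    have hv' : f.coeff v ≠ 0 := Finsupp.mem_support_iff.1 hv
    have : (auxPi j f).coeff (v.1, v.2.1) = 0 := by rw [h0]; rfl
    rw [auxPi_apply] at this
    apply hv'
    rw [show v = (v.1, v.2.1, j) by rw [← hvj]]
    exact this
  · intro h0
    obtain ⟨w, hw⟩ := Finsupp.ne_iff.1 (mt AddMonoidAlgebra.coeff_inj.1 h0)
    rw [auxPi_apply, AddMonoidAlgebra.coeff_zero, Finsupp.coe_zero, Pi.zero_apply] at hw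
    exact Finset.mem_image.2 ⟨(w.1, w.2, j), Finsupp.mem_support_iff.2 hw, rfl⟩

lemma aux_S_nonempty {f : AddMonoidAlgebra k (ℤ × ℤ × ℤ)} (hf : f ≠ 0) :
    (auxS f).Nonempty :=
  Finset.Nonempty.image (Finsupp.support_nonempty_iff.2 (mt AddMonoidAlgebra.coeff_eq_zero.1 hf)) _

lemma aux_iota_single (s : ℤ × ℤ) (c : k) :
    ιBA k (AddMonoidAlgebra.single s c)
      = AddMonoidAlgebra.single ((s.1, s.2, 0) : ℤ × ℤ × ℤ) c := by
  show AddMonoidAlgebra.mapDomain embZZ (AddMonoidAlgebra.single s c) = _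
  rw [AddMonoidAlgebra.mapDomain_single]
  rfl

lemma auxPi_iota_mul (j : ℤ) (b : AddMonoidAlgebra k (ℤ × ℤ))
    (f : AddMonoidAlgebra k (ℤ × ℤ × ℤ)) :
    auxPi j (ιBA k b * f) = b * auxPi j f := by
  induction b using AddMonoidAlgebra.induction_linear with
  | zero => simp only [map_zero, zero_mul]; ext w; simp [auxPi_apply]
  | add g h hg hh =>
      rw [map_add, add_mul, add_mul, ← hg, ← hh]
      ext w
      rfl
  | single s c =>
      rw [aux_iota_single]
      ext w
      rw [auxPi_apply, AddMonoidAlgebra.coeff_single_mul_apply, AddMonoidAlgebra.coeff_single_mul_apply,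
        auxPi_apply]
      congr 2
      simp [Prod.ext_iff]

lemma auxPi_single_case (p : ℤ) (f : AddMonoidAlgebra k (ℤ × ℤ × ℤ))
    (h : ∀ v ∈ f.coeff.support, v.2.2 = p) :
    ιBA k (auxPi p f) = f * AddMonoidAlgebra.single ((0, 0, -p) : ℤ × ℤ × ℤ) 1 := by
  ext w
  obtain ⟨w1, w2, r⟩ := w
  rw [AddMonoidAlgebra.coeff_mul_single_apply]
  show Finsupp.mapDomain embZZ (auxPi p f).coeff (w1, w2, r) = _
  by_cases hr : r = 0
  · subst hr
    have h1 : Finsupp.mapDomain embZZ (auxPi p f).coeff (embZZ (w1, w2)) = (auxPi p f).coeff (w1, w2) :=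
      Finsupp.mapDomain_apply (by rintro ⟨a, b⟩ ⟨c, d⟩ hab; simpa [embZZ, Prod.ext_iff] using hab)
        _ _
    have h2 : (embZZ (w1, w2) : ℤ × ℤ × ℤ) = (w1, w2, 0) := rfl
    rw [h2] at h1
    rw [h1, auxPi_apply, mul_one]
    congr 1
    simp [Prod.ext_iff]
  · rw [Finsupp.mapDomain_notin_range]
    · symm
      rw [mul_eq_zero]
      left
      by_contra hne
      have := h _ (Finsupp.mem_support_iff.2 hne)
      have h3 : ((w1, w2, r) - ((0 : ℤ), (0 : ℤ), -p)).2.2 = p := this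
      simp only [Prod.snd_sub] at h3
      omega
    · rintro ⟨⟨a, b⟩, hab⟩
      have : ((a, b, 0) : ℤ × ℤ × ℤ) = (w1, w2, r) := hab
      simp only [Prod.ext_iff] at this
      exact hr (this.2.2).symm

end Aux

section Tau

variable {k : Type*} [Field k] [CharZero k]
  (τ : AddMonoidAlgebra k (ℤ × ℤ × ℤ) ≃ₐ[k] AddMonoidAlgebra k (ℤ × ℤ × ℤ))

lemma aux_x5y4 : Xa k ^ 5 * Ya k ^ 4 = AddMonoidAlgebra.single ((5, 4, 0) : ℤ × ℤ × ℤ) 1 := by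
  rw [Xa, Ya, AddMonoidAlgebra.single_pow, AddMonoidAlgebra.single_pow,
    AddMonoidAlgebra.single_mul_single]
  norm_num [Prod.ext_iff]

lemma aux_xy : Xa k * Ya k = AddMonoidAlgebra.single ((1, 1, 0) : ℤ × ℤ × ℤ) 1 := by
  rw [Xa, Ya, AddMonoidAlgebra.single_mul_single]
  norm_num [Prod.ext_iff]

lemma aux_2u : (2 : AddMonoidAlgebra k (ℤ × ℤ × ℤ)) * Ua k
    = AddMonoidAlgebra.single ((0, 0, 1) : ℤ × ℤ × ℤ) 2 := by
  have h2 : (2 : AddMonoidAlgebra k (ℤ × ℤ × ℤ))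
      = AddMonoidAlgebra.single (0 : ℤ × ℤ × ℤ) 2 := by
    rw [show (2 : k) = 1 + 1 by norm_num, AddMonoidAlgebra.single_add,
      ← AddMonoidAlgebra.one_def]
    norm_num
  rw [h2, Ua, AddMonoidAlgebra.single_mul_single]
  norm_num [Prod.ext_iff]

lemma aux_tau_X (hτx : τ (Xa k) = Xa k ^ 5 * Ya k ^ 4) (m : ℤ) :
    τ (AddMonoidAlgebra.single ((m, 0, 0) : ℤ × ℤ × ℤ) 1)
      = AddMonoidAlgebra.single ((5 * m, 4 * m, 0) : ℤ × ℤ × ℤ) 1 := by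
  have hτx' : τ (AddMonoidAlgebra.single ((1, 0, 0) : ℤ × ℤ × ℤ) 1)
      = AddMonoidAlgebra.single ((5, 4, 0) : ℤ × ℤ × ℤ) 1 := by
    rw [← Xa, hτx, aux_x5y4]
  have hxinv : τ (AddMonoidAlgebra.single ((-1, 0, 0) : ℤ × ℤ × ℤ) 1)
      = AddMonoidAlgebra.single ((-5, -4, 0) : ℤ × ℤ × ℤ) 1 := by
    have h1 : τ (AddMonoidAlgebra.single ((-1, 0, 0) : ℤ × ℤ × ℤ) 1)
        * AddMonoidAlgebra.single ((5, 4, 0) : ℤ × ℤ × ℤ) 1 = 1 := by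
      rw [← hτx', ← map_mul, AddMonoidAlgebra.single_mul_single]
      norm_num [← AddMonoidAlgebra.one_def, map_one, Prod.mk_zero_zero]
    have h2 : AddMonoidAlgebra.single ((5, 4, 0) : ℤ × ℤ × ℤ) 1
        * AddMonoidAlgebra.single ((-5, -4, 0) : ℤ × ℤ × ℤ) (1 : k) = 1 := by
      rw [AddMonoidAlgebra.single_mul_single]
      norm_num [← AddMonoidAlgebra.one_def, Prod.mk_zero_zero]
    calc τ (AddMonoidAlgebra.single ((-1, 0, 0) : ℤ × ℤ × ℤ) 1)
        = τ (AddMonoidAlgebra.single ((-1, 0, 0) : ℤ × ℤ × ℤ) 1)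
          * (AddMonoidAlgebra.single ((5, 4, 0) : ℤ × ℤ × ℤ) 1
            * AddMonoidAlgebra.single ((-5, -4, 0) : ℤ × ℤ × ℤ) 1) := by rw [h2, mul_one]
      _ = AddMonoidAlgebra.single ((-5, -4, 0) : ℤ × ℤ × ℤ) 1 := by
          rw [← mul_assoc, h1, one_mul]
  induction m using Int.induction_on with
  | zero => norm_num [← AddMonoidAlgebra.one_def, map_one, Prod.mk_zero_zero]
  | succ i ih =>
      have hstep : (AddMonoidAlgebra.single ((i + 1, 0, 0) : ℤ × ℤ × ℤ) (1 : k))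
          = AddMonoidAlgebra.single ((i, 0, 0) : ℤ × ℤ × ℤ) 1
            * AddMonoidAlgebra.single ((1, 0, 0) : ℤ × ℤ × ℤ) 1 := by
        rw [AddMonoidAlgebra.single_mul_single]
        exact (aux_single_congr (by ext <;> simp <;> ring) (one_mul 1)).symm
      rw [hstep, map_mul, ih, hτx', AddMonoidAlgebra.single_mul_single]
      exact aux_single_congr (by simp only [Prod.mk_add_mk, Prod.mk.injEq]; refine ⟨by ring, by ring, by ring⟩) (one_mul 1)
  | pred i ih =>
      have hstep : (AddMonoidAlgebra.single ((-i - 1, 0, 0) : ℤ × ℤ × ℤ) (1 : k))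
          = AddMonoidAlgebra.single ((-i, 0, 0) : ℤ × ℤ × ℤ) 1
            * AddMonoidAlgebra.single ((-1, 0, 0) : ℤ × ℤ × ℤ) 1 := by
        rw [AddMonoidAlgebra.single_mul_single]
        exact (aux_single_congr (by simp only [Prod.mk_add_mk, Prod.mk.injEq]; refine ⟨by ring, by ring, by ring⟩) (one_mul 1)).symm
      rw [hstep, map_mul, ih, hxinv, AddMonoidAlgebra.single_mul_single]
      exact aux_single_congr (by simp only [Prod.mk_add_mk, Prod.mk.injEq]; refine ⟨by ring, by ring, by ring⟩) (one_mul 1)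

lemma aux_tau_Y (hτy : τ (Ya k) = Xa k * Ya k) (n : ℤ) :
    τ (AddMonoidAlgebra.single ((0, n, 0) : ℤ × ℤ × ℤ) 1)
      = AddMonoidAlgebra.single ((n, n, 0) : ℤ × ℤ × ℤ) 1 := by
  have hτy' : τ (AddMonoidAlgebra.single ((0, 1, 0) : ℤ × ℤ × ℤ) 1)
      = AddMonoidAlgebra.single ((1, 1, 0) : ℤ × ℤ × ℤ) 1 := by
    rw [← Ya, hτy, aux_xy]
  have hyinv : τ (AddMonoidAlgebra.single ((0, -1, 0) : ℤ × ℤ × ℤ) 1)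
      = AddMonoidAlgebra.single ((-1, -1, 0) : ℤ × ℤ × ℤ) 1 := by
    have h1 : τ (AddMonoidAlgebra.single ((0, -1, 0) : ℤ × ℤ × ℤ) 1)
        * AddMonoidAlgebra.single ((1, 1, 0) : ℤ × ℤ × ℤ) 1 = 1 := by
      rw [← hτy', ← map_mul, AddMonoidAlgebra.single_mul_single]
      norm_num [← AddMonoidAlgebra.one_def, map_one, Prod.mk_zero_zero]
    have h2 : AddMonoidAlgebra.single ((1, 1, 0) : ℤ × ℤ × ℤ) 1
        * AddMonoidAlgebra.single ((-1, -1, 0) : ℤ × ℤ × ℤ) (1 : k) = 1 := by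
      rw [AddMonoidAlgebra.single_mul_single]
      norm_num [← AddMonoidAlgebra.one_def, Prod.mk_zero_zero]
    calc τ (AddMonoidAlgebra.single ((0, -1, 0) : ℤ × ℤ × ℤ) 1)
        = τ (AddMonoidAlgebra.single ((0, -1, 0) : ℤ × ℤ × ℤ) 1)
          * (AddMonoidAlgebra.single ((1, 1, 0) : ℤ × ℤ × ℤ) 1
            * AddMonoidAlgebra.single ((-1, -1, 0) : ℤ × ℤ × ℤ) 1) := by rw [h2, mul_one]
      _ = AddMonoidAlgebra.single ((-1, -1, 0) : ℤ × ℤ × ℤ) 1 := by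
          rw [← mul_assoc, h1, one_mul]
  induction n using Int.induction_on with
  | zero => norm_num [← AddMonoidAlgebra.one_def, map_one, Prod.mk_zero_zero]
  | succ i ih =>
      have hstep : (AddMonoidAlgebra.single ((0, i + 1, 0) : ℤ × ℤ × ℤ) (1 : k))
          = AddMonoidAlgebra.single ((0, i, 0) : ℤ × ℤ × ℤ) 1
            * AddMonoidAlgebra.single ((0, 1, 0) : ℤ × ℤ × ℤ) 1 := by
        rw [AddMonoidAlgebra.single_mul_single]
        exact (aux_single_congr (by ext <;> simp <;> ring) (one_mul 1)).symm
      rw [hstep, map_mul, ih, hτy', AddMonoidAlgebra.single_mul_single]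
      exact aux_single_congr (by ext <;> simp <;> ring) (one_mul 1)
  | pred i ih =>
      have hstep : (AddMonoidAlgebra.single ((0, -i - 1, 0) : ℤ × ℤ × ℤ) (1 : k))
          = AddMonoidAlgebra.single ((0, -i, 0) : ℤ × ℤ × ℤ) 1
            * AddMonoidAlgebra.single ((0, -1, 0) : ℤ × ℤ × ℤ) 1 := by
        rw [AddMonoidAlgebra.single_mul_single]
        exact (aux_single_congr (by simp only [Prod.mk_add_mk, Prod.mk.injEq]; refine ⟨by ring, by ring, by ring⟩) (one_mul 1)).symm
      rw [hstep, map_mul, ih, hyinv, AddMonoidAlgebra.single_mul_single]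
      exact aux_single_congr (by simp only [Prod.mk_add_mk, Prod.mk.injEq]; refine ⟨by ring, by ring, by ring⟩) (one_mul 1)

lemma aux_tau_U (hτu : τ (Ua k) = 2 * Ua k) (p : ℤ) :
    τ (AddMonoidAlgebra.single ((0, 0, p) : ℤ × ℤ × ℤ) 1)
      = AddMonoidAlgebra.single ((0, 0, p) : ℤ × ℤ × ℤ) ((2 : k) ^ p) := by
  have h2k : (2 : k) ≠ 0 := two_ne_zero
  have hτu' : τ (AddMonoidAlgebra.single ((0, 0, 1) : ℤ × ℤ × ℤ) 1)
      = AddMonoidAlgebra.single ((0, 0, 1) : ℤ × ℤ × ℤ) 2 := by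
    rw [← Ua, hτu, aux_2u]
  have huinv : τ (AddMonoidAlgebra.single ((0, 0, -1) : ℤ × ℤ × ℤ) 1)
      = AddMonoidAlgebra.single ((0, 0, -1) : ℤ × ℤ × ℤ) (2 : k)⁻¹ := by
    have h1 : τ (AddMonoidAlgebra.single ((0, 0, -1) : ℤ × ℤ × ℤ) 1)
        * AddMonoidAlgebra.single ((0, 0, 1) : ℤ × ℤ × ℤ) (2 : k) = 1 := by
      have : (AddMonoidAlgebra.single ((0, 0, -1) : ℤ × ℤ × ℤ) (1 : k))
          * AddMonoidAlgebra.single ((0, 0, 1) : ℤ × ℤ × ℤ) 1 = 1 := by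
        rw [AddMonoidAlgebra.single_mul_single]
        norm_num [← AddMonoidAlgebra.one_def, Prod.mk_zero_zero]
      calc τ (AddMonoidAlgebra.single ((0, 0, -1) : ℤ × ℤ × ℤ) 1)
          * AddMonoidAlgebra.single ((0, 0, 1) : ℤ × ℤ × ℤ) (2 : k)
          = τ (AddMonoidAlgebra.single ((0, 0, -1) : ℤ × ℤ × ℤ) 1)
            * τ (AddMonoidAlgebra.single ((0, 0, 1) : ℤ × ℤ × ℤ) 1) := by rw [hτu']
        _ = 1 := by rw [← map_mul, this, map_one]
    have h2 : AddMonoidAlgebra.single ((0, 0, 1) : ℤ × ℤ × ℤ) (2 : k)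
        * AddMonoidAlgebra.single ((0, 0, -1) : ℤ × ℤ × ℤ) (2 : k)⁻¹ = 1 := by
      rw [AddMonoidAlgebra.single_mul_single]
      rw [mul_inv_cancel₀ h2k]
      norm_num [← AddMonoidAlgebra.one_def, Prod.mk_zero_zero]
    calc τ (AddMonoidAlgebra.single ((0, 0, -1) : ℤ × ℤ × ℤ) 1)
        = τ (AddMonoidAlgebra.single ((0, 0, -1) : ℤ × ℤ × ℤ) 1)
          * (AddMonoidAlgebra.single ((0, 0, 1) : ℤ × ℤ × ℤ) (2 : k)
            * AddMonoidAlgebra.single ((0, 0, -1) : ℤ × ℤ × ℤ) (2 : k)⁻¹) := by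
          rw [h2, mul_one]
      _ = AddMonoidAlgebra.single ((0, 0, -1) : ℤ × ℤ × ℤ) (2 : k)⁻¹ := by
          rw [← mul_assoc, h1, one_mul]
  induction p using Int.induction_on with
  | zero => norm_num [← AddMonoidAlgebra.one_def, map_one, Prod.mk_zero_zero]
  | succ i ih =>
      have hstep : (AddMonoidAlgebra.single ((0, 0, (i : ℤ) + 1) : ℤ × ℤ × ℤ) (1 : k))
          = AddMonoidAlgebra.single ((0, 0, (i : ℤ)) : ℤ × ℤ × ℤ) 1
            * AddMonoidAlgebra.single ((0, 0, 1) : ℤ × ℤ × ℤ) 1 := by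
        rw [AddMonoidAlgebra.single_mul_single]
        exact (aux_single_congr (by ext <;> simp <;> ring) (one_mul 1)).symm
      rw [hstep, map_mul, ih, hτu', AddMonoidAlgebra.single_mul_single, zpow_add_one₀ h2k]
      exact aux_single_congr (by ext <;> simp <;> ring) rfl
  | pred i ih =>
      have hstep : (AddMonoidAlgebra.single ((0, 0, (-i : ℤ) - 1) : ℤ × ℤ × ℤ) (1 : k))
          = AddMonoidAlgebra.single ((0, 0, (-i : ℤ)) : ℤ × ℤ × ℤ) 1
            * AddMonoidAlgebra.single ((0, 0, -1) : ℤ × ℤ × ℤ) 1 := by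
        rw [AddMonoidAlgebra.single_mul_single]
        exact (aux_single_congr (by simp only [Prod.mk_add_mk, Prod.mk.injEq]; refine ⟨by ring, by ring, by ring⟩) (one_mul 1)).symm
      rw [hstep, map_mul, ih, huinv, AddMonoidAlgebra.single_mul_single, zpow_sub_one₀ h2k]
      exact aux_single_congr (by simp only [Prod.mk_add_mk, Prod.mk.injEq]; refine ⟨by ring, by ring, by ring⟩) rfl

lemma aux_tau_single (hτx : τ (Xa k) = Xa k ^ 5 * Ya k ^ 4)
    (hτy : τ (Ya k) = Xa k * Ya k) (hτu : τ (Ua k) = 2 * Ua k)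
    (v : ℤ × ℤ × ℤ) (c : k) :
    τ (AddMonoidAlgebra.single v c)
      = AddMonoidAlgebra.single (auxM3 v) ((2 : k) ^ v.2.2 * c) := by
  obtain ⟨m, n, p⟩ := v
  have hdecomp : (AddMonoidAlgebra.single ((m, n, p) : ℤ × ℤ × ℤ) c)
      = c • (AddMonoidAlgebra.single ((m, 0, 0) : ℤ × ℤ × ℤ) 1
        * AddMonoidAlgebra.single ((0, n, 0) : ℤ × ℤ × ℤ) 1
        * AddMonoidAlgebra.single ((0, 0, p) : ℤ × ℤ × ℤ) 1) := by
    rw [AddMonoidAlgebra.single_mul_single, AddMonoidAlgebra.single_mul_single,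
      AddMonoidAlgebra.smul_single]
    norm_num
  rw [hdecomp, map_smul, map_mul, map_mul, aux_tau_X τ hτx, aux_tau_Y τ hτy, aux_tau_U τ hτu,
    AddMonoidAlgebra.single_mul_single, AddMonoidAlgebra.single_mul_single, AddMonoidAlgebra.smul_single]
  show AddMonoidAlgebra.single _ _ = _
  rw [show auxM3 (m, n, p) = (5 * m + n, 4 * m + n, p) from rfl]
  norm_num [Prod.ext_iff, mul_comm]

lemma aux_tau_apply (hτx : τ (Xa k) = Xa k ^ 5 * Ya k ^ 4)
    (hτy : τ (Ya k) = Xa k * Ya k) (hτu : τ (Ua k) = 2 * Ua k)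
    (f : AddMonoidAlgebra k (ℤ × ℤ × ℤ)) (w : ℤ × ℤ × ℤ) :
    (τ f).coeff w = (2 : k) ^ w.2.2 * f.coeff (auxM3.symm w) := by
  induction f using AddMonoidAlgebra.induction_linear with
  | zero => simp
  | add f g hf hg =>
      rw [map_add]
      show (τ f + τ g).coeff w = _
      rw [AddMonoidAlgebra.coeff_add, Finsupp.add_apply]
      show _ = (2 : k) ^ w.2.2 * ((f + g).coeff (auxM3.symm w))
      rw [AddMonoidAlgebra.coeff_add, Finsupp.add_apply, hf, hg]
      ring
  | single v c =>
      rw [aux_tau_single τ hτx hτy hτu]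
      by_cases hvw : v = auxM3.symm w
      · subst hvw
        rw [Equiv.apply_symm_apply]
        rw [AddMonoidAlgebra.coeff_single, AddMonoidAlgebra.coeff_single, Finsupp.single_apply, if_pos rfl, Finsupp.single_apply, if_pos rfl]
        rfl
      · rw [AddMonoidAlgebra.coeff_single, AddMonoidAlgebra.coeff_single, Finsupp.single_apply, if_neg, Finsupp.single_apply, if_neg hvw, mul_zero]
        intro hc
        exact hvw (by rw [← hc, Equiv.symm_apply_apply])

lemma aux_pi_tau (hτx : τ (Xa k) = Xa k ^ 5 * Ya k ^ 4)
    (hτy : τ (Ya k) = Xa k * Ya k) (hτu : τ (Ua k) = 2 * Ua k)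
    (f : AddMonoidAlgebra k (ℤ × ℤ × ℤ)) (j : ℤ) :
    auxPi j (τ f) = (2 : k) ^ j • auxSig (auxPi j f) := by
  ext w
  obtain ⟨w1, w2⟩ := w
  rw [auxPi_apply, aux_tau_apply τ hτx hτy hτu]
  rw [AddMonoidAlgebra.coeff_smul, Finsupp.smul_apply, auxSig_apply, auxPi_apply, smul_eq_mul]
  rfl

end Tau

section Key

variable {k : Type*} [Field k] [CharZero k]

lemma aux_mul_top (φ : ℤ × ℤ → ℝ) (hadd : ∀ v w, φ (v + w) = φ v + φ w)
    (hinj : Function.Injective φ)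
    (f g : AddMonoidAlgebra k (ℤ × ℤ)) (tf tg : ℤ × ℤ)
    (hf : ∀ v ∈ f.coeff.support, φ v ≤ φ tf) (hg : ∀ w ∈ g.coeff.support, φ w ≤ φ tg) :
    (f * g).coeff (tf + tg) = f.coeff tf * g.coeff tg := by
  classical
  rw [AddMonoidAlgebra.coeff_mul]
  have inner_eq : ∀ a₁ ∈ f.coeff.support,
      (g.coeff.sum fun a₂ b₂ => if a₁ + a₂ = tf + tg then f.coeff a₁ * b₂ else 0)
        = if a₁ = tf then f.coeff a₁ * g.coeff tg else 0 := by
    intro a₁ ha₁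
    by_cases h1 : a₁ = tf
    · subst h1
      rw [if_pos rfl]
      simp only [add_right_inj]
      rw [Finsupp.sum_ite_eq' g.coeff tg (fun _ b => f.coeff a₁ * b)]
      by_cases htg : tg ∈ g.coeff.support
      · rw [if_pos htg]
      · rw [if_neg htg, Finsupp.notMem_support_iff.1 htg, mul_zero]
    · rw [if_neg h1]
      have hz : (g.coeff.sum fun a₂ b₂ => if a₁ + a₂ = tf + tg then f.coeff a₁ * b₂ else 0)
          = g.coeff.sum (fun _ _ => (0 : k)) := by
        apply Finsupp.sum_congr
        intro a₂ ha₂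
        rw [if_neg]
        intro hc
        have hφ : φ a₁ + φ a₂ = φ tf + φ tg := by rw [← hadd, ← hadd, hc]
        have h2 := hf a₁ ha₁
        have h3 := hg a₂ ha₂
        have : φ a₁ = φ tf := by linarith
        exact h1 (hinj this)
      rw [hz, Finsupp.sum, Finset.sum_const_zero]
  have houter : (f.coeff.sum fun a₁ b₁ => g.coeff.sum fun a₂ b₂ => if a₁ + a₂ = tf + tg then b₁ * b₂ else 0)
      = f.coeff.sum fun a₁ b₁ => if a₁ = tf then b₁ * g.coeff tg else 0 := by
    apply Finsupp.sum_congr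
    intro a₁ ha₁
    exact inner_eq a₁ ha₁
  rw [houter, Finsupp.sum_ite_eq' f.coeff tf (fun _ b => b * g.coeff tg)]
  by_cases htf : tf ∈ f.coeff.support
  · rw [if_pos htf]
  · rw [if_neg htf, Finsupp.notMem_support_iff.1 htf, zero_mul]

lemma aux_two_zpow_inj {p q : ℤ} (h : (2 : k) ^ q = (2 : k) ^ p) : q = p := by
  have h2 : ((2 : ℚ) : k) = (2 : k) := by norm_num
  have hq : (((2 : ℚ) ^ q : ℚ) : k) = (((2 : ℚ) ^ p : ℚ) : k) := by
    rw [Rat.cast_zpow, Rat.cast_zpow, h2, h]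
  have h3 : (2 : ℚ) ^ q = (2 : ℚ) ^ p := Rat.cast_injective hq
  exact zpow_right_injective₀ (by norm_num : (0 : ℚ) < 2) (by norm_num) h3

lemma aux_key (g h : AddMonoidAlgebra k (ℤ × ℤ)) (hg : g ≠ 0) (hh : h ≠ 0)
    (p q : ℤ) (hpq : p ≠ q)
    (E : (2 : k) ^ q • (g * auxSig h) = (2 : k) ^ p • (auxSig g * h)) : False := by
  classical
  set s : ℝ := Real.sqrt 2 with hs_def
  have hs : s ^ 2 = 2 := Real.sq_sqrt (by norm_num)
  have hs0 : 0 ≤ s := Real.sqrt_nonneg 2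
  set φ : ℤ × ℤ → ℝ := fun v => (2 + 2 * s) * (v.1 : ℝ) + (v.2 : ℝ) with hφ_def
  have hadd : ∀ v w : ℤ × ℤ, φ (v + w) = φ v + φ w := by
    rintro ⟨a, b⟩ ⟨c, d⟩
    simp only [hφ_def, Prod.fst_add, Prod.snd_add]
    push_cast
    ring
  have hinj : Function.Injective φ := by
    rintro ⟨a, b⟩ ⟨c, d⟩ hEq
    simp only [hφ_def] at hEq
    by_cases hac : a = c
    · subst hac
      have : (b : ℝ) = (d : ℝ) := by linarith
      have : b = d := by exact_mod_cast this
      rw [this]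
    · exfalso
      have hac' : (a : ℝ) - (c : ℝ) ≠ 0 := by
        intro h0
        apply hac
        have : (a : ℝ) = (c : ℝ) := by linarith
        exact_mod_cast this
      have hsval : s = (((d - b - 2 * (a - c) : ℤ) : ℚ) / ((2 * (a - c) : ℤ) : ℚ) : ℚ) := by
        have hden : ((2 * (a - c) : ℤ) : ℝ) ≠ 0 := by
          push_cast
          intro h0
          apply hac'
          linarith
        push_cast
        push_cast at hden
        field_simp
        nlinarith [hEq]
      exact irrational_sqrt_two ⟨_, hsval.symm⟩
  set lam : ℝ := 3 + 2 * s with hlam_def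
  have hlam1 : 1 < lam := by simp only [hlam_def]; nlinarith
  have hM : ∀ v : ℤ × ℤ, φ (auxM2 v) = lam * φ v := by
    rintro ⟨m, n⟩
    show (2 + 2 * s) * ((5 * m + n : ℤ) : ℝ) + ((4 * m + n : ℤ) : ℝ)
      = (3 + 2 * s) * ((2 + 2 * s) * (m : ℝ) + (n : ℝ))
    push_cast
    linear_combination (-4 * (m : ℝ)) * hs
  -- argmaxes
  obtain ⟨tg, htg, htgmax⟩ :=
    Finset.exists_max_image g.coeff.support φ (Finsupp.support_nonempty_iff.2 (mt AddMonoidAlgebra.coeff_eq_zero.1 hg))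
  obtain ⟨th, hth, hthmax⟩ :=
    Finset.exists_max_image h.coeff.support φ (Finsupp.support_nonempty_iff.2 (mt AddMonoidAlgebra.coeff_eq_zero.1 hh))
  have hgtg : g.coeff tg ≠ 0 := Finsupp.mem_support_iff.1 htg
  have hhth : h.coeff th ≠ 0 := Finsupp.mem_support_iff.1 hth
  have hlam0 : (0 : ℝ) < lam := by linarith
  have hsig_max : ∀ (b : AddMonoidAlgebra k (ℤ × ℤ)) (tb : ℤ × ℤ),
      (∀ v ∈ b.coeff.support, φ v ≤ φ tb) →
      ∀ w ∈ (auxSig b).coeff.support, φ w ≤ φ (auxM2 tb) := by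
    intro b tb hb w hw
    have hbw : b.coeff (auxM2.symm w) ≠ 0 := by
      have := Finsupp.mem_support_iff.1 hw
      rwa [auxSig_apply] at this
    have h1 : φ (auxM2.symm w) ≤ φ tb := hb _ (Finsupp.mem_support_iff.2 hbw)
    calc φ w = φ (auxM2 (auxM2.symm w)) := by rw [Equiv.apply_symm_apply]
      _ = lam * φ (auxM2.symm w) := hM _
      _ ≤ lam * φ tb := by nlinarith
      _ = φ (auxM2 tb) := (hM _).symm
  have hsgh : ∀ w ∈ (auxSig h).coeff.support, φ w ≤ φ (auxM2 th) := hsig_max h th hthmax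
  have hsgg : ∀ w ∈ (auxSig g).coeff.support, φ w ≤ φ (auxM2 tg) := hsig_max g tg htgmax
  have h2k : (2 : k) ≠ 0 := two_ne_zero
  have hzq : (2 : k) ^ q ≠ 0 := zpow_ne_zero _ h2k
  have hzp : (2 : k) ^ p ≠ 0 := zpow_ne_zero _ h2k
  -- coefficient of LHS at w₀
  have hcoefL : (g * auxSig h).coeff (tg + auxM2 th) = g.coeff tg * h.coeff th := by
    rw [aux_mul_top φ hadd hinj g (auxSig h) tg (auxM2 th) htgmax hsgh]
    congr 1
    rw [auxSig_apply, Equiv.symm_apply_apply]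
  have hcoefR : (auxSig g * h).coeff (auxM2 tg + th) = g.coeff tg * h.coeff th := by
    rw [aux_mul_top φ hadd hinj (auxSig g) h (auxM2 tg) th hsgg hthmax]
    rw [auxSig_apply, Equiv.symm_apply_apply]
  have hval : g.coeff tg * h.coeff th ≠ 0 := mul_ne_zero hgtg hhth
  -- φ inequalities
  have hEw0 : ((2 : k) ^ p • (auxSig g * h)).coeff (tg + auxM2 th) ≠ 0 := by
    rw [← E, AddMonoidAlgebra.coeff_smul, Finsupp.smul_apply, hcoefL, smul_eq_mul]
    exact mul_ne_zero hzq hval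
  have hw0supp : (tg + auxM2 th) ∈ (auxSig g * h).coeff.support := by
    rw [Finsupp.mem_support_iff]
    intro h0
    apply hEw0
    rw [AddMonoidAlgebra.coeff_smul, Finsupp.smul_apply, h0, smul_zero]
  have hEw1 : ((2 : k) ^ q • (g * auxSig h)).coeff (auxM2 tg + th) ≠ 0 := by
    rw [E, AddMonoidAlgebra.coeff_smul, Finsupp.smul_apply, hcoefR, smul_eq_mul]
    exact mul_ne_zero hzp hval
  have hw1supp : (auxM2 tg + th) ∈ (g * auxSig h).coeff.support := by
    rw [Finsupp.mem_support_iff]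
    intro h0
    apply hEw1
    rw [AddMonoidAlgebra.coeff_smul, Finsupp.smul_apply, h0, smul_zero]
  have hboundR : φ (tg + auxM2 th) ≤ φ (auxM2 tg) + φ th := by
    have := AddMonoidAlgebra.support_coeff_mul_subset (auxSig g) h hw0supp
    rw [Finset.mem_add] at this
    obtain ⟨y, hy, z, hz, hyz⟩ := this
    rw [← hyz, hadd]
    have h1 := hsgg y hy
    have h2 := hthmax z hz
    linarith
  have hboundL : φ (auxM2 tg + th) ≤ φ tg + φ (auxM2 th) := by
    have := AddMonoidAlgebra.support_coeff_mul_subset g (auxSig h) hw1supp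
    rw [Finset.mem_add] at this
    obtain ⟨y, hy, z, hz, hyz⟩ := this
    rw [← hyz, hadd]
    have h1 := htgmax y hy
    have h2 := hsgh z hz
    linarith
  rw [hadd, hM] at hboundR hboundL
  rw [hM] at hboundR hboundL
  have hφeq : φ tg = φ th := by nlinarith
  have hteq : tg = th := hinj hφeq
  subst hteq
  -- compare coefficients
  have hEval : (2 : k) ^ q * (g.coeff tg * h.coeff tg) = (2 : k) ^ p * (g.coeff tg * h.coeff tg) := by
    have e1 : ((2 : k) ^ q • (g * auxSig h)).coeff (tg + auxM2 tg)
        = ((2 : k) ^ p • (auxSig g * h)).coeff (tg + auxM2 tg) := by rw [E]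
    rw [AddMonoidAlgebra.coeff_smul, AddMonoidAlgebra.coeff_smul, Finsupp.smul_apply, Finsupp.smul_apply, hcoefL] at e1
    rw [show tg + auxM2 tg = auxM2 tg + tg from add_comm _ _] at e1
    rw [hcoefR] at e1
    simpa [smul_eq_mul] using e1
  have : (2 : k) ^ q = (2 : k) ^ p := mul_right_cancel₀ hval hEval
  exact hpq (aux_two_zpow_inj this).symm

end Key

/-- If `k` has characteristic zero and `τ` is the `k`-algebra automorphism of `A` with
`τ(x) = x^5 y^4`, `τ(y) = x y`, `τ(u) = 2u`, then every nonzero `τ`-invariant ideal of `A`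
contains `ι(b)` for some nonzero `b ∈ B`. -/
theorem stmt5 (k : Type*) [Field k] [CharZero k]
    (τ : AddMonoidAlgebra k (ℤ × ℤ × ℤ) ≃ₐ[k] AddMonoidAlgebra k (ℤ × ℤ × ℤ))
    (hτx : τ (Xa k) = Xa k ^ 5 * Ya k ^ 4)
    (hτy : τ (Ya k) = Xa k * Ya k)
    (hτu : τ (Ua k) = 2 * Ua k)
    (I : Ideal (AddMonoidAlgebra k (ℤ × ℤ × ℤ)))
    (hI0 : I ≠ ⊥) (hIinv : Ideal.map τ I = I) :
    ∃ b : AddMonoidAlgebra k (ℤ × ℤ), b ≠ 0 ∧ ιBA k b ∈ I := by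
  classical
  obtain ⟨a0, ha0I, ha0ne⟩ := Submodule.exists_mem_ne_zero_of_ne_bot hI0
  set P : ℕ → Prop := fun n => ∃ a, a ∈ I ∧ a ≠ 0 ∧ (auxS a).card = n with hP_def
  have hex : ∃ n, P n := ⟨(auxS a0).card, a0, ha0I, ha0ne, rfl⟩
  obtain ⟨a, haI, hane, hcard⟩ := Nat.find_spec hex
  have hminimal : ∀ e, e ∈ I → (auxS e).card < Nat.find hex → e = 0 := by
    intro e heI hlt
    by_contra hene
    have : P (auxS e).card := ⟨e, heI, hene, rfl⟩
    exact absurd (Nat.find_le this) (by omega)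
  have hSne : (auxS a).Nonempty := aux_S_nonempty hane
  by_cases hone : (auxS a).card = 1
  · -- single u-degree case
    obtain ⟨p, hp⟩ := Finset.card_eq_one.1 hone
    have hsupp : ∀ v ∈ a.coeff.support, v.2.2 = p := by
      intro v hv
      have : v.2.2 ∈ auxS a := Finset.mem_image_of_mem _ hv
      rw [hp, Finset.mem_singleton] at this
      exact this
    refine ⟨auxPi p a, ?_, ?_⟩
    · rw [← aux_mem_S, hp]
      exact Finset.mem_singleton_self p
    · rw [auxPi_single_case p a hsupp]
      exact I.mul_mem_right _ haI
  · -- at least two u-degrees: derive a contradiction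
    exfalso
    have h2le : 2 ≤ (auxS a).card := by
      have h1 : 0 < (auxS a).card := Finset.card_pos.2 hSne
      omega
    obtain ⟨p, hpS, q, hqS, hpq⟩ := Finset.one_lt_card.1 h2le
    have hgp : auxPi p a ≠ 0 := aux_mem_S.1 hpS
    have hgq : auxPi q a ≠ 0 := aux_mem_S.1 hqS
    have hτaI : τ a ∈ I := hIinv ▸ Ideal.mem_map_of_mem τ haI
    set g1 : AddMonoidAlgebra k (ℤ × ℤ) := auxPi p a with hg1_def
    set g2 : AddMonoidAlgebra k (ℤ × ℤ) := (2 : k) ^ p • auxSig g1 with hg2_def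
    set e : AddMonoidAlgebra k (ℤ × ℤ × ℤ) := ιBA k g1 * τ a - ιBA k g2 * a with he_def
    have heI : e ∈ I := I.sub_mem (I.mul_mem_left _ hτaI) (I.mul_mem_left _ haI)
    have hpie : ∀ j : ℤ, auxPi j e
        = g1 * ((2 : k) ^ j • auxSig (auxPi j a)) - g2 * auxPi j a := by
      intro j
      rw [he_def, auxPi_sub, auxPi_iota_mul, auxPi_iota_mul, aux_pi_tau τ hτx hτy hτu]
    have hpie_p : auxPi p e = 0 := by
      rw [hpie p, hg2_def, ← hg1_def, mul_comm, sub_self]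
    have hSe : auxS e ⊆ (auxS a).erase p := by
      intro j hj
      have hje : auxPi j e ≠ 0 := aux_mem_S.1 hj
      rw [Finset.mem_erase]
      constructor
      · intro hjp
        subst hjp
        exact hje hpie_p
      · rw [aux_mem_S]
        intro hja
        apply hje
        rw [hpie j, hja, auxSig_zero, smul_zero, mul_zero, mul_zero, sub_self]
    have hcardlt : (auxS e).card < Nat.find hex := by
      calc (auxS e).card ≤ ((auxS a).erase p).card := Finset.card_le_card hSe
        _ = (auxS a).card - 1 := Finset.card_erase_of_mem hpS
        _ < (auxS a).card := by omega
        _ = Nat.find hex := hcard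
    have he0 : e = 0 := hminimal e heI hcardlt
    have hq0 : auxPi q e = 0 := by rw [he0]; ext w; simp [auxPi_apply]
    rw [hpie q] at hq0
    have hE : (2 : k) ^ q • (g1 * auxSig (auxPi q a))
        = (2 : k) ^ p • (auxSig g1 * auxPi q a) := by
      have := sub_eq_zero.1 hq0
      rw [mul_smul_comm] at this
      rw [hg2_def, smul_mul_assoc] at this
      exact this
    exact aux_key g1 (auxPi q a) hgp hgq p q hpq hE
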